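/- Let p be a prime, s ≥ 1, n ≥ 1, F_q a finite field of characteristic p, γ ∈ F_q nonzero with x^n + γ irreducible over F_q, and let β, i be integers with 1 ≤ β ≤ p-2 and βp^{s-1} + 1 ≤ i ≤ (β+1)p^{s-1}. Then the minimum Hamming distance of the ideal C = ⟨(x^n + γ)^i⟩ in F_q[x]/⟨(x^n + γ)^{p^s}⟩ equals β + 2. -/

import Mathlib

open Polynomial Finset

namespace Stmt16Aux

variable {F : Type*} [Field F]

/-- The `r`-th part of `g` w.r.t. decomposition by exponent residues mod `N`. -/
noncomputable def pPart (N r : ℕ) (g : F[X]) : F[X] :=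
  ∑ t ∈ Finset.range (g.natDegree + 1), C (g.coeff (t * N + r)) * X ^ t

lemma coeff_pPart {N : ℕ} (hN : 0 < N) (g : F[X]) (r t : ℕ) :
    (pPart N r g).coeff t = g.coeff (t * N + r) := by
  unfold pPart
  rw [finset_sum_coeff]
  simp_rw [coeff_C_mul, coeff_X_pow, mul_ite, mul_one, mul_zero]
  rw [Finset.sum_ite_eq (Finset.range (g.natDegree + 1)) t
    (fun u => g.coeff (u * N + r))]
  by_cases ht : t ∈ Finset.range (g.natDegree + 1)
  · rw [if_pos ht]
  · rw [if_neg ht]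
    have h1 : g.natDegree + 1 ≤ t := by
      rw [Finset.mem_range] at ht; omega
    have h2 : g.natDegree < t * N + r := by
      have : t ≤ t * N := Nat.le_mul_of_pos_right t hN
      omega
    exact (coeff_eq_zero_of_natDegree_lt h2).symm

lemma coeff_X_pow_mul_expand {N r : ℕ} (hN : 0 < N) (hr : r < N) (u : F[X]) (m : ℕ) :
    (X ^ r * expand F N u).coeff m = if m % N = r then u.coeff (m / N) else 0 := by
  rw [coeff_X_pow_mul', coeff_expand hN]
  have hdm := Nat.div_add_mod m N
  by_cases h : m % N = r
  · have h1 : r ≤ m := h ▸ Nat.mod_le m N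
    have h2 : m - r = N * (m / N) := by omega
    rw [if_pos h1, if_pos h, h2, if_pos ⟨m / N, rfl⟩, Nat.mul_div_cancel_left _ hN]
  · rw [if_neg h]
    by_cases h1 : r ≤ m
    · have hx : ¬ N ∣ m - r := by
        rintro ⟨k, hk⟩
        apply h
        have hm : m = N * k + r := by omega
        rw [hm, Nat.mul_add_mod, Nat.mod_eq_of_lt hr]
      rw [if_pos h1, if_neg hx]
    · rw [if_neg h1]

lemma reconstruct {N : ℕ} (hN : 0 < N) (g : F[X]) :
    g = ∑ r ∈ Finset.range N, X ^ r * expand F N (pPart N r g) := by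
  ext m
  rw [finset_sum_coeff]
  rw [Finset.sum_congr rfl (fun r hr =>
    coeff_X_pow_mul_expand hN (Finset.mem_range.1 hr) (pPart N r g) m)]
  rw [Finset.sum_ite_eq (Finset.range N) (m % N)
    (fun r => (pPart N r g).coeff (m / N))]
  rw [if_pos (Finset.mem_range.2 (Nat.mod_lt m hN)), coeff_pPart hN,
    Nat.div_add_mod' m N]

lemma pPart_sum {N r : ℕ} (hN : 0 < N) (hr : r < N) (u : ℕ → F[X]) :
    pPart N r (∑ r' ∈ Finset.range N, X ^ r' * expand F N (u r')) = u r := by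
  ext t
  rw [coeff_pPart hN, finset_sum_coeff]
  rw [Finset.sum_congr rfl (fun r' hr' =>
    coeff_X_pow_mul_expand hN (Finset.mem_range.1 hr') (u r') (t * N + r))]
  have h1 : (t * N + r) % N = r := by
    rw [Nat.mul_comm, Nat.mul_add_mod, Nat.mod_eq_of_lt hr]
  have h2 : (t * N + r) / N = t := by
    rw [Nat.mul_comm t N, Nat.mul_add_div hN, Nat.div_eq_of_lt hr, Nat.add_zero]
  simp_rw [h1, h2]
  rw [Finset.sum_ite_eq (Finset.range N) r (fun r' => (u r').coeff t),
    if_pos (Finset.mem_range.2 hr)]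

lemma pPart_mul {N r : ℕ} (hN : 0 < N) (hr : r < N) (h g : F[X]) :
    pPart N r (expand F N h * g) = h * pPart N r g := by
  conv_lhs => rw [reconstruct hN g, Finset.mul_sum]
  rw [Finset.sum_congr rfl (fun r' _ => show
      expand F N h * (X ^ r' * expand F N (pPart N r' g))
        = X ^ r' * expand F N (h * pPart N r' g) by
    rw [map_mul]; ring)]
  exact pPart_sum hN hr _

lemma card_pPart {N : ℕ} (hN : 0 < N) (g : F[X]) :
    g.support.card = ∑ r ∈ Finset.range N, (pPart N r g).support.card := by
  rw [Finset.card_eq_sum_card_fiberwise (f := fun k => k % N) (t := Finset.range N)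
    (fun x _ => Finset.mem_range.2 (Nat.mod_lt x hN))]
  refine Finset.sum_congr rfl fun r hr => ?_
  have hrN : r < N := Finset.mem_range.1 hr
  refine Finset.card_bij' (fun k _ => k / N) (fun t _ => t * N + r) ?_ ?_ ?_ ?_
  · intro k hk
    rw [Finset.mem_filter, mem_support_iff] at hk
    rw [mem_support_iff, coeff_pPart hN]
    have hk2 : k / N * N + r = k := by
      have h5 := Nat.div_add_mod' k N
      omega
    rw [hk2]
    exact hk.1
  · intro t ht
    rw [mem_support_iff, coeff_pPart hN] at ht
    rw [Finset.mem_filter, mem_support_iff]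
    refine ⟨ht, ?_⟩
    rw [Nat.mul_comm, Nat.mul_add_mod, Nat.mod_eq_of_lt hrN]
  · intro k hk
    rw [Finset.mem_filter] at hk
    have h5 := Nat.div_add_mod' k N
    omega
  · intro t _
    rw [Nat.mul_comm t N, Nat.mul_add_div hN, Nat.div_eq_of_lt hrN, Nat.add_zero]

lemma natDegree_pPart_lt {N D : ℕ} (hN : 0 < N) (hD : 0 < D) {g : F[X]}
    (h : g.natDegree < D * N) (r : ℕ) : (pPart N r g).natDegree < D := by
  have : (pPart N r g).natDegree ≤ D - 1 := by
    rw [natDegree_le_iff_coeff_eq_zero]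
    intro q hq
    rw [coeff_pPart hN]
    apply coeff_eq_zero_of_natDegree_lt
    have : D ≤ q := by omega
    have h2 : D * N ≤ q * N := Nat.mul_le_mul_right N this
    omega
  omega

lemma card_expand {N : ℕ} (hN : 0 < N) (u : F[X]) :
    (expand F N u).support.card = u.support.card := by
  refine Finset.card_bij' (fun k _ => k / N) (fun t _ => N * t) ?_ ?_ ?_ ?_
  · intro k hk
    rw [mem_support_iff, coeff_expand hN] at hk
    split_ifs at hk with h
    · rwa [mem_support_iff]
    · exact absurd rfl hk
  · intro t ht
    rw [mem_support_iff, coeff_expand_mul' hN]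
    rwa [mem_support_iff] at ht
  · intro k hk
    rw [mem_support_iff, coeff_expand hN] at hk
    split_ifs at hk with h
    · obtain ⟨j, rfl⟩ := h
      rw [Nat.mul_div_cancel_left _ hN]
    · exact absurd rfl hk
  · intro t _
    rw [Nat.mul_div_cancel_left _ hN]


lemma wt_ge (p : ℕ) (hp : p.Prime) [CharP F p] {c : F} (hc : c ≠ 0) :
    ∀ d : ℕ, ∀ h : F[X], h.natDegree = d → h ≠ 0 → h.natDegree < p →
      ∀ m : ℕ, (X + C c) ^ m ∣ h → m + 1 ≤ h.support.card := by
  intro d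
  induction d using Nat.strong_induction_on with
  | _ d IH =>
  intro h hd h0 hdp m hdvd
  match m with
  | 0 => simpa using Finset.card_pos.2 (support_nonempty.2 h0)
  | m + 1 =>
  have hdvd1 : (X + C c) ∣ h := dvd_trans (dvd_pow_self _ (Nat.succ_ne_zero m)) hdvd
  have hdeg1 : 1 ≤ h.natDegree := by
    have h1 := natDegree_le_of_dvd hdvd1 h0
    rwa [natDegree_X_add_C] at h1
  by_cases h0c : h.coeff 0 = 0
  · obtain ⟨k, rfl⟩ := X_dvd_iff.2 h0c
    have hk0 : k ≠ 0 := right_ne_zero_of_mul h0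
    have hX0 : (X : F[X]) ≠ 0 := X_ne_zero
    have hcop : IsCoprime ((X : F[X]) + C c) X := by
      refine ⟨C c⁻¹, -C c⁻¹, ?_⟩
      have : C c⁻¹ * C c = 1 := by
        rw [← C_mul, inv_mul_cancel₀ hc, C_1]
      ring_nf
      linear_combination this
    have hdvdk : (X + C c) ^ (m + 1) ∣ k :=
      (hcop.pow_left).dvd_of_dvd_mul_left hdvd
    have hdegXk : (X * k).natDegree = 1 + k.natDegree := by
      rw [natDegree_mul hX0 hk0, natDegree_X]
    have hcards : (X * k).support.card = k.support.card := by
      refine Finset.card_bij' (fun t _ => t - 1) (fun t _ => t + 1) ?_ ?_ ?_ ?_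
      · intro t ht
        rw [mem_support_iff] at ht ⊢
        have ht0 : t ≠ 0 := by
          intro h'
          rw [h', coeff_X_mul_zero] at ht
          exact ht rfl
        obtain ⟨u, rfl⟩ : ∃ u, t = u + 1 := ⟨t - 1, by omega⟩
        rwa [coeff_X_mul] at ht
      · intro t ht
        rw [mem_support_iff] at ht ⊢
        rwa [coeff_X_mul]
      · intro t ht
        rw [mem_support_iff] at ht
        have ht0 : t ≠ 0 := by
          intro h'
          rw [h', coeff_X_mul_zero] at ht
          exact ht rfl
        omega
      · intro t _
        omega
    rw [hcards]
    have hkd : k.natDegree < d := by omega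
    exact IH k.natDegree hkd k rfl hk0 (by omega) (m + 1) hdvdk
  · set h' := derivative h with hh'
    have hcoeffd : h'.coeff (h.natDegree - 1) ≠ 0 := by
      rw [hh', coeff_derivative]
      have he : h.natDegree - 1 + 1 = h.natDegree := by omega
      rw [he]
      apply mul_ne_zero
      · exact mt leadingCoeff_eq_zero.1 h0
      · have hcast : ((h.natDegree - 1 : ℕ) : F) + 1 = ((h.natDegree - 1 + 1 : ℕ) : F) := by
          push_cast
          ring
        rw [hcast, he, Ne, CharP.cast_eq_zero_iff F p]
        intro hdvdp
        have := Nat.le_of_dvd (by omega) hdvdp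
        omega
    have h'0 : h' ≠ 0 := fun e => hcoeffd (by rw [e, coeff_zero])
    have hd' : h'.natDegree < d := by
      have hle := natDegree_derivative_le h
      rw [← hh'] at hle
      omega
    have hdvd' : (X + C c) ^ m ∣ h' := by
      obtain ⟨u, rfl⟩ := hdvd
      rw [hh', derivative_mul, derivative_X_add_C_pow]
      simp only [Nat.add_sub_cancel]
      exact dvd_add ⟨C ((m + 1 : ℕ) : F) * u, by ring⟩
        ⟨(X + C c) * derivative u, by ring⟩
    have hIH := IH h'.natDegree hd' h' rfl h'0 (by omega) m hdvd'
    have hsub : h'.support ⊆ (h.support.erase 0).image (fun t => t - 1) := by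
      intro t ht
      rw [mem_support_iff, hh', coeff_derivative] at ht
      have hc1 : h.coeff (t + 1) ≠ 0 := left_ne_zero_of_mul ht
      rw [Finset.mem_image]
      exact ⟨t + 1, Finset.mem_erase.2 ⟨Nat.succ_ne_zero t, mem_support_iff.2 hc1⟩, rfl⟩
    have hcard1 : h'.support.card ≤ h.support.card - 1 := by
      calc h'.support.card ≤ ((h.support.erase 0).image (fun t => t - 1)).card :=
            Finset.card_le_card hsub
        _ ≤ (h.support.erase 0).card := Finset.card_image_le
        _ = h.support.card - 1 := Finset.card_erase_of_mem (mem_support_iff.2 h0c)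
    have hpos : 1 ≤ h.support.card := Finset.card_pos.2 (support_nonempty.2 h0)
    omega

lemma lower (p s n β : ℕ) (hp : p.Prime) [CharP F p] (hs : 1 ≤ s) (hn : 1 ≤ n)
    {γ : F} (hγ : γ ≠ 0) (f : F[X]) (hf0 : f ≠ 0)
    (hdeg : f.natDegree < n * p ^ s)
    (hdvd : ((X : F[X]) ^ n + C γ) ^ (β * p ^ (s - 1) + 1) ∣ f) :
    β + 2 ≤ f.support.card := by
  classical
  haveI : Fact p.Prime := ⟨hp⟩
  haveI : ExpChar F[X] p := ExpChar.prime hp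
  set M := p ^ (s - 1) with hM
  have hM0 : 0 < M := pow_pos hp.pos _
  set N := n * M with hN
  have hN0 : 0 < N := Nat.mul_pos hn hM0
  set c := γ ^ M with hc
  have hc0 : c ≠ 0 := pow_ne_zero _ hγ
  set a : F[X] := X ^ n + C γ with ha
  have ha0 : a ≠ 0 := X_pow_add_C_ne_zero (by omega) γ
  have haM : a ^ M = X ^ N + C c := by
    rw [ha, hM, add_pow_char_pow, ← pow_mul, ← C_pow]
  obtain ⟨g0, hfg0⟩ := hdvd
  set g := a * g0 with hg
  have hexp : expand F N ((X + C c) ^ β) = a ^ (β * M) := by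
    rw [map_pow, map_add, expand_X, expand_C, ← haM, ← pow_mul, mul_comm M β]
  have hfg : f = expand F N ((X + C c) ^ β) * g := by
    rw [hexp, hg, ← mul_assoc, ← pow_succ]
    exact hfg0
  have hag : a ∣ g := dvd_mul_right a g0
  have hg0 : g ≠ 0 := by
    intro h
    apply hf0
    rw [hfg, h, mul_zero]
  have hps : p * M = p ^ s := by
    rw [hM, ← pow_succ']
    congr 1
    omega
  have hdegparts : ∀ r, (pPart N r f).natDegree < p := by
    intro r
    refine natDegree_pPart_lt hN0 hp.pos ?_ r
    calc f.natDegree < n * p ^ s := hdeg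
      _ = p * N := by rw [hN, ← hps]; ring
  have hparts : ∀ r, r < N → pPart N r f = (X + C c) ^ β * pPart N r g := by
    intro r hr
    rw [hfg, pPart_mul hN0 hr]
  set T := (Finset.range N).filter (fun r => pPart N r g ≠ 0) with hT
  have hTne : T.Nonempty := by
    by_contra hTe
    rw [Finset.not_nonempty_iff_eq_empty, Finset.filter_eq_empty_iff] at hTe
    apply hg0
    conv_lhs => rw [reconstruct hN0 g]
    exact Finset.sum_eq_zero fun r hr => by
      rw [not_not.1 (hTe hr), map_zero, mul_zero]
  have hwt : f.support.card = ∑ r ∈ Finset.range N, (pPart N r f).support.card :=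
    card_pPart hN0 f
  have key : ∀ r ∈ T, β + 1 ≤ (pPart N r f).support.card := by
    intro r hr
    rw [hT, Finset.mem_filter] at hr
    have hprf := hparts r (Finset.mem_range.1 hr.1)
    have hne : pPart N r f ≠ 0 := by
      rw [hprf]
      exact mul_ne_zero (pow_ne_zero _ (X_add_C_ne_zero c)) hr.2
    exact wt_ge p hp hc0 _ _ rfl hne (hdegparts r) β ⟨pPart N r g, hprf⟩
  by_cases hcard : 1 < T.card
  · obtain ⟨r1, hr1, r2, hr2, hne⟩ := Finset.one_lt_card.1 hcard
    have hsub : ({r1, r2} : Finset ℕ) ⊆ Finset.range N := by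
      intro x hx
      rcases Finset.mem_insert.1 hx with h | h
      · subst h; exact (Finset.mem_filter.1 hr1).1
      · rw [Finset.mem_singleton] at h; subst h; exact (Finset.mem_filter.1 hr2).1
    have hsum : (β + 1) + (β + 1) ≤ ∑ r ∈ Finset.range N, (pPart N r f).support.card := by
      calc (β + 1) + (β + 1) ≤ ∑ r ∈ ({r1, r2} : Finset ℕ), (pPart N r f).support.card := by
            rw [Finset.sum_pair hne]
            exact Nat.add_le_add (key r1 hr1) (key r2 hr2)
        _ ≤ _ := Finset.sum_le_sum_of_subset hsub
    omega
  · have hc1 : T.card = 1 := by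
      have := Finset.card_pos.2 hTne
      omega
    obtain ⟨r0, hTr0⟩ := Finset.card_eq_one.1 hc1
    have hr0T : r0 ∈ T := hTr0 ▸ Finset.mem_singleton_self r0
    have hr0N : r0 < N := Finset.mem_range.1 (Finset.mem_filter.1 hr0T).1
    set u := pPart N r0 g with hu
    have hu0 : u ≠ 0 := (Finset.mem_filter.1 hr0T).2
    have hgu : g = X ^ r0 * expand F N u := by
      conv_lhs => rw [reconstruct hN0 g]
      rw [Finset.sum_eq_single r0]
      · intro r hr hne
        have hz : pPart N r g = 0 := by
          by_contra hnz
          have : r ∈ T := Finset.mem_filter.2 ⟨hr, hnz⟩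
          rw [hTr0, Finset.mem_singleton] at this
          exact hne this
        rw [hz, map_zero, mul_zero]
      · intro h
        exact absurd (Finset.mem_range.2 hr0N) h
    have hcopXa : IsCoprime (X ^ r0 : F[X]) a := by
      apply IsCoprime.pow_left
      refine ⟨-C γ⁻¹ * X ^ (n - 1), C γ⁻¹, ?_⟩
      have hXn : (X : F[X]) ^ (n - 1) * X = X ^ n := by
        rw [← pow_succ]
        congr 1
        omega
      have hCinv : C γ⁻¹ * C γ = (1 : F[X]) := by
        rw [← C_mul, inv_mul_cancel₀ hγ, C_1]
      calc -C γ⁻¹ * X ^ (n - 1) * X + C γ⁻¹ * a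
          = C γ⁻¹ * (a - X ^ n) := by rw [← hXn]; ring
        _ = C γ⁻¹ * C γ := by rw [ha]; ring_nf
        _ = 1 := hCinv
    have hadvd : a ∣ expand F N u := by
      have h1 : a ∣ X ^ r0 * expand F N u := hgu ▸ hag
      exact (hcopXa.symm).dvd_of_dvd_mul_left h1
    have heval : u.eval (-c) = 0 := by
      obtain ⟨v, hv⟩ := X_sub_C_dvd_sub_C_eval (a := -c) (p := u)
      have happ : expand F N u - C (u.eval (-c)) = a ^ M * expand F N v := by
        have h2 := congrArg (expand F N) hv
        rw [map_sub, map_mul, map_sub, expand_X, expand_C, expand_C] at h2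
        have h3 : (X : F[X]) ^ N - C (-c) = X ^ N + C c := by
          rw [map_neg, sub_neg_eq_add]
        rw [h3, ← haM] at h2
        exact h2
      have h4 : a ∣ expand F N u - C (u.eval (-c)) := by
        rw [happ]
        exact Dvd.dvd.mul_right (dvd_pow_self a (by omega : M ≠ 0)) _
      have hdvdC : a ∣ C (u.eval (-c)) := by
        have h5 := dvd_sub hadvd h4
        simpa using h5
      by_contra hne0
      have h6 : a.natDegree ≤ (C (u.eval (-c))).natDegree :=
        natDegree_le_of_dvd hdvdC (by simpa using hne0)
      rw [natDegree_C, ha, natDegree_X_pow_add_C] at h6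
      omega
    have hXCu : (X + C c) ∣ u := by
      have h7 := dvd_iff_isRoot.2 (show IsRoot u (-c) from heval)
      rwa [map_neg, sub_neg_eq_add] at h7
    obtain ⟨u', hu'⟩ := hXCu
    have hparts0 : pPart N r0 f = (X + C c) ^ (β + 1) * u' := by
      rw [hparts r0 hr0N, ← hu, hu', pow_succ]
      ring
    have hne' : pPart N r0 f ≠ 0 := by
      rw [hparts r0 hr0N]
      exact mul_ne_zero (pow_ne_zero _ (X_add_C_ne_zero c)) hu0
    have hwt0 : β + 2 ≤ (pPart N r0 f).support.card :=
      wt_ge p hp hc0 _ _ rfl hne' (hdegparts r0) (β + 1) ⟨u', hparts0⟩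
    have hle : (pPart N r0 f).support.card ≤ ∑ r ∈ Finset.range N, (pPart N r f).support.card :=
      Finset.single_le_sum (f := fun r => (pPart N r f).support.card)
        (fun r _ => Nat.zero_le _) (Finset.mem_range.2 hr0N)
    omega

lemma wt_pow (p β : ℕ) (hp : p.Prime) [CharP F p] {c : F} (hc : c ≠ 0) (hβ : β + 1 < p) :
    ((X + C c) ^ (β + 1) : F[X]).support.card = β + 2 := by
  have hsupp : ((X + C c) ^ (β + 1) : F[X]).support = Finset.range (β + 2) := by
    ext t
    rw [mem_support_iff, coeff_X_add_C_pow, Finset.mem_range]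
    constructor
    · intro h
      by_contra hgt
      push_neg at hgt
      rw [Nat.choose_eq_zero_of_lt (by omega), Nat.cast_zero, mul_zero] at h
      exact h rfl
    · intro ht
      apply mul_ne_zero (pow_ne_zero _ hc)
      rw [Ne, CharP.cast_eq_zero_iff F p]
      intro hdvd
      have h8 := Nat.choose_mul_factorial_mul_factorial (show t ≤ β + 1 by omega)
      have hp1 : p ∣ (β + 1).factorial :=
        h8 ▸ Dvd.dvd.mul_right (Dvd.dvd.mul_right hdvd _) _
      have := (Nat.Prime.dvd_factorial hp).1 hp1
      omega
  rw [hsupp, Finset.card_range]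

end Stmt16Aux

theorem stmt_16 (p s n : ℕ) (hp : p.Prime) (hs : 1 ≤ s) (hn : 1 ≤ n)
    (F : Type*) [Field F] [Fintype F] [CharP F p]
    (γ : F) (hγ : γ ≠ 0) (hirr : Irreducible ((X : F[X]) ^ n + C γ))
    (β i : ℕ) (hβ1 : 1 ≤ β) (hβ2 : β ≤ p - 2)
    (hi1 : β * p ^ (s - 1) + 1 ≤ i) (hi2 : i ≤ (β + 1) * p ^ (s - 1)) :
    sInf {w : ℕ | ∃ f : F[X], f ≠ 0 ∧ f.natDegree < n * p ^ s ∧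
        Ideal.Quotient.mk (Ideal.span {((X : F[X]) ^ n + C γ) ^ p ^ s}) f ∈
          Ideal.span {Ideal.Quotient.mk (Ideal.span {((X : F[X]) ^ n + C γ) ^ p ^ s})
            (((X : F[X]) ^ n + C γ) ^ i)} ∧
        w = f.support.card} = β + 2 := by
  classical
  haveI : Fact p.Prime := ⟨hp⟩
  haveI : ExpChar F[X] p := ExpChar.prime hp
  have hp2 : 2 ≤ p := hp.two_le
  have hβp : β + 1 ≤ p - 1 := by omega
  have hM0 : 0 < p ^ (s - 1) := pow_pos hp.pos _
  have hps : p * p ^ (s - 1) = p ^ s := by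
    rw [← pow_succ']
    congr 1
    omega
  have hips : i ≤ p ^ s := by
    calc i ≤ (β + 1) * p ^ (s - 1) := hi2
      _ ≤ (p - 1) * p ^ (s - 1) := Nat.mul_le_mul_right _ hβp
      _ ≤ p * p ^ (s - 1) := Nat.mul_le_mul_right _ (by omega)
      _ = p ^ s := hps
  have ha0 : ((X : F[X]) ^ n + C γ) ≠ 0 := X_pow_add_C_ne_zero (by omega) γ
  have hwitmem : (β + 2) ∈ {w : ℕ | ∃ f : F[X], f ≠ 0 ∧ f.natDegree < n * p ^ s ∧
      Ideal.Quotient.mk (Ideal.span {((X : F[X]) ^ n + C γ) ^ p ^ s}) f ∈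
        Ideal.span {Ideal.Quotient.mk (Ideal.span {((X : F[X]) ^ n + C γ) ^ p ^ s})
          (((X : F[X]) ^ n + C γ) ^ i)} ∧
      w = f.support.card} := by
    refine ⟨((X : F[X]) ^ n + C γ) ^ ((β + 1) * p ^ (s - 1)), pow_ne_zero _ ha0, ?_, ?_, ?_⟩
    · rw [natDegree_pow, natDegree_X_pow_add_C]
      have h1 : (β + 1) * p ^ (s - 1) < p ^ s := by
        calc (β + 1) * p ^ (s - 1) < p * p ^ (s - 1) :=
              (Nat.mul_lt_mul_right hM0).2 (by omega)
          _ = p ^ s := hps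
      calc (β + 1) * p ^ (s - 1) * n < p ^ s * n := (Nat.mul_lt_mul_right (by omega)).2 h1
        _ = n * p ^ s := Nat.mul_comm _ _
    · rw [Ideal.mem_span_singleton]
      refine ⟨Ideal.Quotient.mk _ (((X : F[X]) ^ n + C γ) ^ ((β + 1) * p ^ (s - 1) - i)), ?_⟩
      rw [← map_mul, ← pow_add,
        show i + ((β + 1) * p ^ (s - 1) - i) = (β + 1) * p ^ (s - 1) from
          Nat.add_sub_cancel' hi2]
    · have hexp : ((X : F[X]) ^ n + C γ) ^ ((β + 1) * p ^ (s - 1)) =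
          expand F (n * p ^ (s - 1)) ((X + C (γ ^ p ^ (s - 1))) ^ (β + 1)) := by
        rw [map_pow, map_add, expand_X, expand_C,
          show ((X : F[X]) ^ n + C γ) ^ ((β + 1) * p ^ (s - 1)) =
            (((X : F[X]) ^ n + C γ) ^ p ^ (s - 1)) ^ (β + 1) from by
              rw [← pow_mul, Nat.mul_comm]]
        congr 1
        rw [add_pow_char_pow, ← pow_mul, ← C_pow]
      rw [hexp, Stmt16Aux.card_expand (Nat.mul_pos (by omega) hM0),
        Stmt16Aux.wt_pow p β hp (pow_ne_zero _ hγ) (by omega)]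
  have hlb : ∀ w ∈ {w : ℕ | ∃ f : F[X], f ≠ 0 ∧ f.natDegree < n * p ^ s ∧
      Ideal.Quotient.mk (Ideal.span {((X : F[X]) ^ n + C γ) ^ p ^ s}) f ∈
        Ideal.span {Ideal.Quotient.mk (Ideal.span {((X : F[X]) ^ n + C γ) ^ p ^ s})
          (((X : F[X]) ^ n + C γ) ^ i)} ∧
      w = f.support.card}, β + 2 ≤ w := by
    rintro w ⟨f, hf0, hdeg, hmem, rfl⟩
    rw [Ideal.mem_span_singleton] at hmem
    obtain ⟨z, hz⟩ := hmem
    obtain ⟨h, rfl⟩ := Ideal.Quotient.mk_surjective z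
    rw [← map_mul, Ideal.Quotient.eq, Ideal.mem_span_singleton] at hz
    obtain ⟨k, hk⟩ := hz
    have hdv : ((X : F[X]) ^ n + C γ) ^ i ∣ f := by
      refine ⟨h + ((X : F[X]) ^ n + C γ) ^ (p ^ s - i) * k, ?_⟩
      have hsplit : ((X : F[X]) ^ n + C γ) ^ p ^ s =
          ((X : F[X]) ^ n + C γ) ^ i * ((X : F[X]) ^ n + C γ) ^ (p ^ s - i) := by
        rw [← pow_add, Nat.add_sub_cancel' hips]
      rw [mul_add, ← mul_assoc, ← hsplit]
      linear_combination hk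
    have hdv2 : ((X : F[X]) ^ n + C γ) ^ (β * p ^ (s - 1) + 1) ∣ f :=
      dvd_trans (pow_dvd_pow _ hi1) hdv
    exact Stmt16Aux.lower p s n β hp hs hn hγ f hf0 hdeg hdv2
  exact le_antisymm (Nat.sInf_le hwitmem) (le_csInf ⟨_, hwitmem⟩ hlb)
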